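/- For every integer r ≥ 1, there exists a bridgeless simple graph G of order n = 3r + 1 such that every OCDC of G consists of exactly 4r = (n − 1) + r directed cycles. Concretely, the graph obtained from a path v_1, …, v_{r+1} by replacing each edge v_i v_{i+1} by a copy of K_4 on vertex set {v_i, v_i', v_{i+1}, v_{i+1}'} has this property. -/

import Mathlib

open SimpleGraph

/-- The list of arcs of a cyclically-read list of vertices:
`[(l₀,l₁), (l₁,l₂), …, (lₙ₋₁,l₀)]`. -/
def cycleArcs {V : Type*} (l : List V) : List (V × V) := l.zip (l.rotate 1)

/-- `l` represents a directed cycle of the symmetric orientation of `G`: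
a cyclic sequence of at least three pairwise distinct vertices with consecutive
vertices adjacent (cyclically). -/
def IsDirCycle {V : Type*} (G : SimpleGraph V) (l : List V) : Prop :=
  3 ≤ l.length ∧ l.Nodup ∧ ∀ p ∈ cycleArcs l, G.Adj p.1 p.2

/-- An oriented cycle double cover of `G` : a collection of directed cycles of the
symmetric orientation of `G` such that each arc `(u,v)` (with `u ~ v` in `G`) lies
in exactly one of the cycles. -/
def IsOCDC {V : Type*} (G : SimpleGraph V) (C : Finset (List V)) : Prop :=
  (∀ l ∈ C, IsDirCycle G l) ∧
    ∀ u v : V, G.Adj u v → ∃! l : List V, l ∈ C ∧ (u, v) ∈ cycleArcs l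

/-- `G` (a graph with vertex set of size `n`) has a small oriented cycle double cover:
an OCDC with at most `n - 1` directed cycles. -/
def HasSOCDC {V : Type*} (G : SimpleGraph V) : Prop :=
  ∃ C : Finset (List V), IsOCDC G C ∧ C.card ≤ Nat.card V - 1

/-- `l` represents a directed path of the symmetric orientation of `G`. -/
def IsDirPath {V : Type*} (G : SimpleGraph V) (l : List V) : Prop :=
  l ≠ [] ∧ l.Nodup ∧ l.Chain' G.Adj

/-- An oriented perfect path double cover of `G`: a collection of directed paths of the
symmetric orientation of `G` such that each arc lies in exactly one path, and every
vertex occurs exactly once as the start and exactly once as the end of a path. -/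
def IsOPPDC {V : Type*} (G : SimpleGraph V) (P : Finset (List V)) : Prop :=
  (∀ l ∈ P, IsDirPath G l) ∧
    (∀ u v : V, G.Adj u v → ∃! l : List V, l ∈ P ∧ (u, v) ∈ l.zip l.tail) ∧
    (∀ v : V, ∃! l : List V, l ∈ P ∧ l.head? = some v) ∧
    (∀ v : V, ∃! l : List V, l ∈ P ∧ l.getLast? = some v)

/-- Membership of a vertex in the `i`-th `K₄`-block of the chain of `K₄`'s: the block
contains the path vertices `vᵢ, vᵢ₊₁` (the `Sum.inl` vertices `i.castSucc`, `i.succ`)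
and its two private vertices (the `Sum.inr` vertices with first coordinate `i`). -/
def inBlockK4 (r : ℕ) (i : Fin r) : Fin (r + 1) ⊕ Fin r × Fin 2 → Prop
  | Sum.inl j => j = i.castSucc ∨ j = i.succ
  | Sum.inr p => p.1 = i

/-- The graph obtained from a path `v₁, …, v_{r+1}` by replacing each edge `vᵢvᵢ₊₁` by a
copy of `K₄` on `vᵢ, vᵢ₊₁` and two new private vertices: two distinct vertices are
adjacent iff they lie in a common `K₄`-block. -/
def chainOfK4 (r : ℕ) : SimpleGraph (Fin (r + 1) ⊕ Fin r × Fin 2) where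
  Adj x y := x ≠ y ∧ ∃ i : Fin r, inBlockK4 r i x ∧ inBlockK4 r i y
  symm := by
    constructor
    rintro x y ⟨hxy, i, hx, hy⟩
    exact ⟨hxy.symm, i, hy, hx⟩
  loopless := by
    constructor
    rintro x ⟨hxx, -⟩
    exact hxx rfl

section ChainK4Aux

variable {r : ℕ}


variable {r : ℕ}

abbrev ChainK4V (r : ℕ) := Fin (r + 1) ⊕ Fin r × Fin 2

lemma inl_mem_iff {i : Fin r} {j : Fin (r+1)} :
    inBlockK4 r i (Sum.inl j) ↔ ((j : ℕ) = i ∨ (j : ℕ) = i + 1) := by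
  show (j = i.castSucc ∨ j = i.succ) ↔ _
  rw [Fin.ext_iff, Fin.ext_iff]
  simp

lemma inr_mem_iff {i : Fin r} {p : Fin r × Fin 2} :
    inBlockK4 r i (Sum.inr p) ↔ p.1 = i := Iff.rfl

/-- A vertex in two distinct blocks is an `inl` vertex whose value is the max. -/
lemma shared_vertex {i i' : Fin r} (h : i ≠ i') {v : ChainK4V r}
    (hv : inBlockK4 r i v) (hv' : inBlockK4 r i' v) :
    ∃ j : Fin (r+1), v = Sum.inl j ∧ (j : ℕ) = max (i : ℕ) (i' : ℕ) := by
  cases v with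
  | inr p =>
    rw [inr_mem_iff] at hv hv'
    exact absurd (hv ▸ hv') h
  | inl j =>
    refine ⟨j, rfl, ?_⟩
    rw [inl_mem_iff] at hv hv'
    have : (i : ℕ) ≠ (i' : ℕ) := fun hh => h (Fin.ext hh)
    omega

/-- Two distinct vertices determine the block containing both. -/
lemma block_eq_of_two {i i' : Fin r} {u v : ChainK4V r} (huv : u ≠ v)
    (hu : inBlockK4 r i u) (hu' : inBlockK4 r i' u)
    (hv : inBlockK4 r i v) (hv' : inBlockK4 r i' v) : i = i' := by
  by_contra h
  obtain ⟨j, rfl, hj⟩ := shared_vertex h hu hu'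
  obtain ⟨j', rfl, hj'⟩ := shared_vertex h hv hv'
  exact huv (by rw [Fin.ext (hj.trans hj'.symm)])

lemma adj_iff {u v : ChainK4V r} :
    (chainOfK4 r).Adj u v ↔ u ≠ v ∧ ∃ i : Fin r, inBlockK4 r i u ∧ inBlockK4 r i v :=
  Iff.rfl

/-- Every directed cycle of the chain of K4's is confined to a single block. -/
lemma cycle_confined {l : List (ChainK4V r)} (hl : IsDirCycle (chainOfK4 r) l) :
    ∃ i : Fin r, ∀ v ∈ l, inBlockK4 r i v := by
  obtain ⟨hlen, hnd, harc⟩ := hl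
  set k := l.length with hk
  have hk0 : 0 < k := by omega
  -- the cyclic vertex function
  set x : ℕ → ChainK4V r := fun t => l.get ⟨t % k, Nat.mod_lt _ hk0⟩ with hx
  have hmm : ∀ t : ℕ, t % k % k = t % k := fun t => Nat.mod_mod_of_dvd t dvd_rfl
  have hxmod : ∀ t, x (t % k) = x t := by
    intro t; simp [hx, hmm]
  have hxper : ∀ t m, x (t + k * m) = x t := by
    intro t m; simp [hx, Nat.add_mul_mod_self_left]
  have harcmem : ∀ t, (x t, x (t + 1)) ∈ cycleArcs l := by
    intro t
    have hlt : t % k < (l.zip (l.rotate 1)).length := by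
      rw [List.length_zip, List.length_rotate]; simpa using Nat.mod_lt t hk0
    have hmem := List.getElem_mem hlt
    rw [List.getElem_zip] at hmem
    have hrot : (l.rotate 1)[t % k]'(by simpa [List.length_rotate] using Nat.mod_lt t hk0) =
        l[(t + 1) % k]'(Nat.mod_lt _ hk0) := by
      rw [List.getElem_rotate]
      congr 1
      conv_rhs => rw [← Nat.mod_add_mod]
    rw [hrot] at hmem
    have hx1 : x t = l[t % k]'(Nat.mod_lt _ hk0) := by simp [hx]
    have hx2 : x (t + 1) = l[(t + 1) % k]'(Nat.mod_lt _ hk0) := by simp [hx]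
    rw [hx1, hx2]
    exact hmem
  have hadj : ∀ t, (chainOfK4 r).Adj (x t) (x (t + 1)) := fun t => harc _ (harcmem t)
  have hxne : ∀ t, x t ≠ x (t + 1) := fun t => (hadj t).1
  -- the block of each arc
  have hBex : ∀ t, ∃ i : Fin r, inBlockK4 r i (x t) ∧ inBlockK4 r i (x (t + 1)) :=
    fun t => (hadj t).2
  choose B hB1 hB2 using hBex
  have hBuniq : ∀ t i, inBlockK4 r i (x t) → inBlockK4 r i (x (t + 1)) → i = B t :=
    fun t i h1 h2 => block_eq_of_two (hxne t) h1 (hB1 t) h2 (hB2 t)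
  have hBper : ∀ t m, B (t + k * m) = B t := by
    intro t m
    have h1 : x (t + k * m) = x t := hxper t m
    have h2 : x (t + k * m + 1) = x (t + 1) := by
      have : t + k * m + 1 = (t + 1) + k * m := by ring
      rw [this]; exact hxper (t + 1) m
    exact hBuniq _ (B (t + k * m)) (h1 ▸ hB1 _) (h2 ▸ hB2 _)
  have hBmod : ∀ t, B (t % k) = B t := by
    intro t
    conv_rhs => rw [← Nat.mod_add_div t k]
    rw [hBper]
  -- suffices: B is constant
  suffices hconst : ∀ t s, B t = B s by
    refine ⟨B 0, fun v hv => ?_⟩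
    obtain ⟨⟨t, ht⟩, rfl⟩ := List.mem_iff_get.mp hv
    have : l.get ⟨t, ht⟩ = x t := by simp [hx, Nat.mod_eq_of_lt (show t < k from ht)]
    rw [this]
    exact (hconst 0 t) ▸ hB1 t
  by_contra hcon
  push_neg at hcon
  obtain ⟨ta, sa, htsa⟩ := hcon
  -- the maximal block value
  have hne : ((Finset.range k).image fun t => (B t : ℕ)).Nonempty :=
    ⟨(B 0 : ℕ), Finset.mem_image.mpr ⟨0, Finset.mem_range.mpr hk0, rfl⟩⟩
  have hMex : ∃ M : ℕ, (∃ t0 : ℕ, (B t0 : ℕ) = M) ∧ ∀ t, (B t : ℕ) ≤ M := by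
    refine ⟨((Finset.range k).image fun t => (B t : ℕ)).max' hne, ?_, ?_⟩
    · obtain ⟨t0, -, ht0⟩ := Finset.mem_image.mp
        (Finset.max'_mem ((Finset.range k).image fun t => (B t : ℕ)) hne)
      exact ⟨t0, ht0⟩
    · intro t
      rw [← hBmod t]
      exact Finset.le_max' ((Finset.range k).image fun t => (B t : ℕ)) _
        (Finset.mem_image.mpr ⟨t % k, Finset.mem_range.mpr (Nat.mod_lt t hk0), rfl⟩)
  obtain ⟨M, ⟨t0, ht0M⟩, hle⟩ := hMex
  have hsmall : ∃ s, (B s : ℕ) < M := by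
    rcases lt_or_ge (B ta : ℕ) M with h | h
    · exact ⟨ta, h⟩
    rcases lt_or_ge (B sa : ℕ) M with h' | h'
    · exact ⟨sa, h'⟩
    exact absurd (Fin.ext (le_antisymm (hle ta) h |>.trans
      (le_antisymm (hle sa) h').symm)) htsa
  obtain ⟨s, hs⟩ := hsmall
  -- there is a "descent" t1 : B t1 = M, B (t1+1) < M
  have H1 : ∃ t, (B t : ℕ) = M ∧ (B (t + 1) : ℕ) < M := by
    by_contra h
    push_neg at h
    have step : ∀ t, (B t : ℕ) = M → (B (t + 1) : ℕ) = M :=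
      fun t ht => le_antisymm (hle _) (h t ht)
    have fwd : ∀ n t, (B t : ℕ) = M → (B (t + n) : ℕ) = M := by
      intro n
      induction n with
      | zero => intro t ht; exact ht
      | succ n ih => intro t ht
                     have := step (t + n) (ih t ht)
                     rwa [show t + n + 1 = t + (n+1) by ring] at this
    have hBB : (B (t0 + (s + k * (t0 + 1) - t0)) : ℕ) = M := fwd _ _ ht0M
    rw [show t0 + (s + k * (t0 + 1) - t0) = s + k * (t0 + 1) by
      have h1 : t0 + 1 ≤ k * (t0 + 1) := Nat.le_mul_of_pos_left _ hk0
      omega] at hBB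
    rw [hBper s (t0 + 1)] at hBB
    omega
  -- and an "ascent" t2 : B t2 < M, B (t2+1) = M
  have H2 : ∃ t, (B t : ℕ) < M ∧ (B (t + 1) : ℕ) = M := by
    by_contra h
    push_neg at h
    have step : ∀ t, (B (t + 1) : ℕ) = M → (B t : ℕ) = M := by
      intro t ht
      rcases lt_or_ge (B t : ℕ) M with hh | hh
      · exact absurd ht (h t hh)
      · exact le_antisymm (hle t) hh
    have bwd : ∀ n t, (B (t + n) : ℕ) = M → (B t : ℕ) = M := by
      intro n
      induction n with
      | zero => intro t ht; exact ht
      | succ n ih => intro t ht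
                     rw [show t + (n + 1) = (t + n) + 1 by ring] at ht
                     exact ih t ((step (t + n)) ht)
    have hsM : (B (s + (t0 + k * (s + 1) - s)) : ℕ) = M := by
      rw [show s + (t0 + k * (s + 1) - s) = t0 + k * (s + 1) by
        have h1 : s + 1 ≤ k * (s + 1) := Nat.le_mul_of_pos_left _ hk0
        omega]
      rw [hBper t0 (s + 1)]
      exact ht0M
    have := bwd _ _ hsM
    omega
  obtain ⟨t1, ht1M, ht1lt⟩ := H1
  obtain ⟨t2, ht2lt, ht2M⟩ := H2
  -- the transition vertices coincide, contradicting Nodup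
  have htr1 : ∃ j : Fin (r+1), x (t1 + 1) = Sum.inl j ∧ (j : ℕ) = M := by
    have hne12 : B t1 ≠ B (t1 + 1) := fun h => by rw [h] at ht1M; omega
    obtain ⟨j, hj1, hj2⟩ := shared_vertex hne12 (hB2 t1) (hB1 (t1 + 1))
    exact ⟨j, hj1, by omega⟩
  have htr2 : ∃ j : Fin (r+1), x (t2 + 1) = Sum.inl j ∧ (j : ℕ) = M := by
    have hne12 : B t2 ≠ B (t2 + 1) := fun h => by rw [h] at ht2lt; omega
    obtain ⟨j, hj1, hj2⟩ := shared_vertex hne12 (hB2 t2) (hB1 (t2 + 1))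
    exact ⟨j, hj1, by omega⟩
  obtain ⟨j1, hxj1, hj1⟩ := htr1
  obtain ⟨j2, hxj2, hj2⟩ := htr2
  have hxeq : x (t1 + 1) = x (t2 + 1) := by
    rw [hxj1, hxj2]
    congr 1
    exact Fin.ext (hj1.trans hj2.symm)
  -- injectivity of x on residues
  have hinj : (t1 + 1) % k = (t2 + 1) % k := by
    have h1 : l.get ⟨(t1 + 1) % k, Nat.mod_lt _ hk0⟩ =
        l.get ⟨(t2 + 1) % k, Nat.mod_lt _ hk0⟩ := hxeq
    have h2 := List.nodup_iff_injective_get.mp hnd h1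
    simpa using congrArg Fin.val h2
  have : B ((t1 + 1) % k) = B ((t2 + 1) % k) := by rw [hinj]
  rw [hBmod, hBmod] at this
  rw [this] at ht1lt
  omega

/-- The four vertices of block `i`. -/
def bverts (r : ℕ) (i : Fin r) : List (ChainK4V r) :=
  [Sum.inl i.castSucc, Sum.inl i.succ, Sum.inr (i, 0), Sum.inr (i, 1)]

lemma bverts_nodup (i : Fin r) : (bverts r i).Nodup := by
  simp [bverts, Fin.ext_iff, Prod.ext_iff]

lemma mem_bverts {i : Fin r} {v : ChainK4V r} : v ∈ bverts r i ↔ inBlockK4 r i v := by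
  cases v with
  | inl j =>
    show _ ↔ (j = i.castSucc ∨ j = i.succ)
    simp [bverts]
  | inr p =>
    obtain ⟨p1, p2⟩ := p
    show _ ↔ p1 = i
    fin_cases p2 <;> simp [bverts, Prod.ext_iff]

def psi (r : ℕ) (i : Fin r) : Fin 4 → ChainK4V r :=
  ![Sum.inl i.castSucc, Sum.inl i.succ, Sum.inr (i, 0), Sum.inr (i, 1)]

def phi (r : ℕ) (i : Fin r) : ChainK4V r → Fin 4 := fun v =>
  if v = Sum.inl i.castSucc then 0
  else if v = Sum.inl i.succ then 1
  else if v = Sum.inr (i, 0) then 2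
  else 3

lemma psi_mem (i : Fin r) (t : Fin 4) : psi r i t ∈ bverts r i := by
  fin_cases t <;> simp [psi, bverts]

lemma exists_psi {i : Fin r} {v : ChainK4V r} (hv : v ∈ bverts r i) : ∃ t, psi r i t = v := by
  simp only [bverts, List.mem_cons, List.mem_singleton, List.not_mem_nil, or_false] at hv
  rcases hv with rfl | rfl | rfl | rfl
  exacts [⟨0, rfl⟩, ⟨1, rfl⟩, ⟨2, rfl⟩, ⟨3, rfl⟩]

lemma phi_psi (i : Fin r) (t : Fin 4) : phi r i (psi r i t) = t := by
  fin_cases t <;> simp [phi, psi, Fin.ext_iff, Prod.ext_iff]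

lemma psi_inj {i : Fin r} {a b : Fin 4} (h : psi r i a = psi r i b) : a = b := by
  have := congrArg (phi r i) h
  rwa [phi_psi, phi_psi] at this

lemma phi_inj {i : Fin r} {u v : ChainK4V r} (hu : u ∈ bverts r i) (hv : v ∈ bverts r i)
    (h : phi r i u = phi r i v) : u = v := by
  obtain ⟨a, rfl⟩ := exists_psi hu
  obtain ⟨b, rfl⟩ := exists_psi hv
  rw [phi_psi, phi_psi] at h
  rw [h]

/-! ### The finite check for `K₄` -/

def quads : List (List (Fin 4)) :=
  (((List.finRange 4).flatMap fun a => (List.finRange 4).flatMap fun b =>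
    (List.finRange 4).flatMap fun c => (List.finRange 4).map fun d => [a,b,c,d])).filter
    fun l => l.Nodup

set_option synthInstance.maxHeartbeats 400000 in
set_option synthInstance.maxSize 1000 in
def covOK (a b c : List (Fin 4)) : Bool :=
  (List.finRange 4).all fun u => (List.finRange 4).all fun v =>
    decide (u = v) ||
    decide (((u,v) ∈ cycleArcs a ∧ (u,v) ∉ cycleArcs b ∧ (u,v) ∉ cycleArcs c) ∨
      ((u,v) ∉ cycleArcs a ∧ (u,v) ∈ cycleArcs b ∧ (u,v) ∉ cycleArcs c) ∨
      ((u,v) ∉ cycleArcs a ∧ (u,v) ∉ cycleArcs b ∧ (u,v) ∈ cycleArcs c))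

set_option maxHeartbeats 2000000 in
theorem noTriple : ∀ a ∈ quads, ∀ b ∈ quads, ∀ c ∈ quads, covOK a b c = false := by decide

theorem mem_quads (l : List (Fin 4)) (h1 : l.Nodup) (h2 : l.length = 4) : l ∈ quads := by
  match l, h2 with
  | [a,b,c,d], _ =>
    simp only [List.nodup_cons, List.mem_cons, List.not_mem_nil, or_false,
      List.mem_singleton, List.nodup_nil, and_true, not_or] at h1
    simp only [quads, List.mem_filter, List.mem_flatMap, List.mem_map, List.mem_finRange]
    refine ⟨⟨a, trivial, b, trivial, c, trivial, d, trivial, rfl⟩, ?_⟩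
    simp only [List.nodup_cons, List.mem_cons, List.not_mem_nil, or_false,
      List.mem_singleton, List.nodup_nil, and_true, not_or, decide_eq_true_eq]
    tauto

/-! ### cycleArcs lemmas -/

lemma cycleArcs_length {α : Type*} (l : List α) : (cycleArcs l).length = l.length := by
  simp [cycleArcs]

lemma cycleArcs_nodup {α : Type*} {l : List α} (h : l.Nodup) : (cycleArcs l).Nodup := by
  have hmap : (cycleArcs l).map Prod.fst = l :=
    List.map_fst_zip (by simp)
  have h2 : ((cycleArcs l).map Prod.fst).Nodup := by rw [hmap]; exact h
  exact List.Nodup.of_map Prod.fst h2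

lemma cycleArcs_map {α β : Type*} (f : α → β) (l : List α) :
    cycleArcs (l.map f) = (cycleArcs l).map (Prod.map f f) := by
  unfold cycleArcs
  rw [← List.map_rotate, List.zip_map]

lemma mem_of_arc {α : Type*} {l : List α} {u v : α} (h : (u, v) ∈ cycleArcs l) :
    u ∈ l ∧ v ∈ l := by
  have := List.of_mem_zip h
  exact ⟨this.1, (List.mem_rotate).mp this.2⟩

/-! ### Counting cycles in one block -/

lemma block_count {C : Finset (List (ChainK4V r))} (hC : IsOCDC (chainOfK4 r) C)
    (F : List (ChainK4V r) → Fin r)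
    (hF : ∀ l ∈ C, ∀ v ∈ l, inBlockK4 r (F l) v) (i : Fin r) :
    (C.filter (fun l => F l = i)).card = 4 := by
  classical
  set Ci := C.filter (fun l => F l = i) with hCidef
  have hCimem : ∀ {l}, l ∈ Ci → l ∈ C ∧ F l = i := fun hl => Finset.mem_filter.mp hl
  -- vertices of cycles in Ci lie in bverts
  have hsubv : ∀ l ∈ Ci, ∀ v ∈ l, v ∈ bverts r i := by
    intro l hl v hv
    obtain ⟨hlC, hFl⟩ := hCimem hl
    exact mem_bverts.mpr (hFl ▸ hF l hlC v hv)
  set s : Finset (ChainK4V r) := (bverts r i).toFinset with hsdef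
  set A : Finset (ChainK4V r × ChainK4V r) := (s ×ˢ s).filter (fun p => p.1 ≠ p.2) with hAdef
  have hscard : s.card = 4 := by
    rw [hsdef, List.toFinset_card_of_nodup (bverts_nodup i)]
    rfl
  have hAcard : A.card = 12 := by
    have h1 : A = (s ×ˢ s) \ s.image (fun u => (u, u)) := by
      ext ⟨u, v⟩
      simp only [hAdef, Finset.mem_filter, Finset.mem_sdiff, Finset.mem_product,
        Finset.mem_image]
      constructor
      · rintro ⟨⟨hu, hv⟩, hne⟩
        exact ⟨⟨hu, hv⟩, fun ⟨a, _, ha⟩ => hne (by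
          obtain ⟨h1, h2⟩ := Prod.mk.injEq .. ▸ ha
          rw [← h1, ← h2])⟩
      · rintro ⟨⟨hu, hv⟩, hne⟩
        refine ⟨⟨hu, hv⟩, fun h => hne ⟨u, hu, by rw [h]⟩⟩
    rw [h1, Finset.card_sdiff_of_subset, Finset.card_product, hscard,
      Finset.card_image_of_injective _ (fun a b h => (Prod.ext_iff.mp h).1)]
    · rw [hscard]
    · rintro ⟨u, v⟩ hp
      obtain ⟨a, ha, haeq⟩ := Finset.mem_image.mp hp
      obtain ⟨h1, h2⟩ := Prod.mk.injEq .. ▸ haeq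
      rw [Finset.mem_product]
      exact ⟨h1 ▸ ha, h2 ▸ ha⟩
  have hmemA : ∀ {u v : ChainK4V r}, (u, v) ∈ A ↔ (u ∈ bverts r i ∧ v ∈ bverts r i ∧ u ≠ v) := by
    intro u v
    simp only [hAdef, Finset.mem_filter, Finset.mem_product, hsdef, List.mem_toFinset]
    tauto
  have hadjA : ∀ p ∈ A, (chainOfK4 r).Adj p.1 p.2 := by
    rintro ⟨u, v⟩ hp
    obtain ⟨hu, hv, hne⟩ := hmemA.mp hp
    exact ⟨hne, i, mem_bverts.mp hu, mem_bverts.mp hv⟩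
  -- each arc of A is covered by exactly one cycle of Ci
  have hcov : ∀ p ∈ A, ∃! l, l ∈ Ci ∧ p ∈ cycleArcs l := by
    rintro ⟨u, v⟩ hp
    obtain ⟨hu, hv, hne⟩ := hmemA.mp hp
    obtain ⟨l, ⟨hlC, hlarc⟩, huniq⟩ := hC.2 u v (hadjA _ hp)
    have hul : u ∈ l := (mem_of_arc hlarc).1
    have hvl : v ∈ l := (mem_of_arc hlarc).2
    have hFl : F l = i :=
      block_eq_of_two hne (hF l hlC u hul) (mem_bverts.mp hu)
        (hF l hlC v hvl) (mem_bverts.mp hv)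
    refine ⟨l, ⟨Finset.mem_filter.mpr ⟨hlC, hFl⟩, hlarc⟩, ?_⟩
    rintro l' ⟨hl', harc'⟩
    exact huniq l' ⟨(hCimem hl').1, harc'⟩
  -- arcs of cycles of Ci lie in A
  have harcA : ∀ l ∈ Ci, ∀ p ∈ cycleArcs l, p ∈ A := by
    rintro l hl ⟨u, v⟩ hp
    have hadj := (hC.1 l (hCimem hl).1).2.2 _ hp
    exact hmemA.mpr ⟨hsubv l hl u (mem_of_arc hp).1, hsubv l hl v (mem_of_arc hp).2, hadj.1⟩
  -- the arc sets of cycles of Ci partition A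
  have hbiun : Ci.biUnion (fun l => (cycleArcs l).toFinset) = A := by
    apply Finset.Subset.antisymm
    · intro p hp
      obtain ⟨l, hl, hpl⟩ := Finset.mem_biUnion.mp hp
      exact harcA l hl p (List.mem_toFinset.mp hpl)
    · intro p hp
      obtain ⟨l, ⟨hl1, hl2⟩, -⟩ := hcov p hp
      exact Finset.mem_biUnion.mpr ⟨l, hl1, List.mem_toFinset.mpr hl2⟩
  have hdisj : ∀ l₁ ∈ Ci, ∀ l₂ ∈ Ci, l₁ ≠ l₂ →
      Disjoint ((cycleArcs l₁).toFinset) ((cycleArcs l₂).toFinset) := by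
    intro l₁ hl₁ l₂ hl₂ hne
    rw [Finset.disjoint_left]
    intro p hp1 hp2
    rw [List.mem_toFinset] at hp1 hp2
    obtain ⟨l', -, huniq⟩ := hcov p (harcA l₁ hl₁ p hp1)
    exact hne ((huniq l₁ ⟨hl₁, hp1⟩).trans (huniq l₂ ⟨hl₂, hp2⟩).symm)
  have hsum : ∑ l ∈ Ci, l.length = 12 := by
    have h1 := Finset.card_biUnion hdisj
    rw [hbiun, hAcard] at h1
    have h2 : ∑ l ∈ Ci, (cycleArcs l).toFinset.card = ∑ l ∈ Ci, l.length := by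
      apply Finset.sum_congr rfl
      intro l hl
      rw [List.toFinset_card_of_nodup (cycleArcs_nodup (hC.1 l (hCimem hl).1).2.1),
        cycleArcs_length]
    rw [← h2]
    exact h1.symm
  have hlen3 : ∀ l ∈ Ci, 3 ≤ l.length := fun l hl => (hC.1 l (hCimem hl).1).1
  have hlen4 : ∀ l ∈ Ci, l.length ≤ 4 := by
    intro l hl
    have := (List.subperm_of_subset (hC.1 l (hCimem hl).1).2.1
      (fun v hv => hsubv l hl v hv)).length_le
    simpa [bverts] using this
  have hcard_ge : 3 * Ci.card ≤ 12 := by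
    calc 3 * Ci.card = ∑ _l ∈ Ci, 3 := by rw [Finset.sum_const, smul_eq_mul, mul_comm]
    _ ≤ ∑ l ∈ Ci, l.length := Finset.sum_le_sum hlen3
    _ = 12 := hsum
  have hcard_le : 12 ≤ 4 * Ci.card := by
    calc (12 : ℕ) = ∑ l ∈ Ci, l.length := hsum.symm
    _ ≤ ∑ _l ∈ Ci, 4 := Finset.sum_le_sum hlen4
    _ = 4 * Ci.card := by rw [Finset.sum_const, smul_eq_mul, mul_comm]
  have hcases : Ci.card = 3 ∨ Ci.card = 4 := by omega
  rcases hcases with hcard3 | hcard4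
  · -- impossible : three Hamiltonian 4-cycles
    exfalso
    obtain ⟨l₁, l₂, l₃, h12, h13, h23, hCieq⟩ := Finset.card_eq_three.mp hcard3
    have hall4 : ∀ l ∈ Ci, l.length = 4 := by
      by_contra h
      push_neg at h
      obtain ⟨l₀, hl₀, hlen₀⟩ := h
      have hlt : ∑ l ∈ Ci, l.length < ∑ _l ∈ Ci, 4 :=
        Finset.sum_lt_sum hlen4 ⟨l₀, hl₀, lt_of_le_of_ne (hlen4 l₀ hl₀) hlen₀⟩
      rw [hsum, Finset.sum_const, smul_eq_mul, hcard3] at hlt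
      omega
    have hmem1 : l₁ ∈ Ci := by rw [hCieq]; simp
    have hmem2 : l₂ ∈ Ci := by rw [hCieq]; simp
    have hmem3 : l₃ ∈ Ci := by rw [hCieq]; simp
    -- transported lists
    have hnodup : ∀ l ∈ Ci, l.Nodup := fun l hl => (hC.1 l (hCimem hl).1).2.1
    have hmquad : ∀ l ∈ Ci, l.map (phi r i) ∈ quads := by
      intro l hl
      apply mem_quads
      · exact List.Nodup.map_on
          (fun u hu v hv h => phi_inj (hsubv l hl u hu) (hsubv l hl v hv) h) (hnodup l hl)
      · rw [List.length_map]; exact hall4 l hl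
    -- arc correspondence
    have harc_iff : ∀ l ∈ Ci, ∀ a b : Fin 4,
        ((a, b) ∈ cycleArcs (l.map (phi r i)) ↔ (psi r i a, psi r i b) ∈ cycleArcs l) := by
      intro l hl a b
      rw [cycleArcs_map]
      constructor
      · intro h
        obtain ⟨⟨u, v⟩, huv, heq⟩ := List.mem_map.mp h
        have h1 : phi r i u = a := (Prod.ext_iff.mp heq).1
        have h2 : phi r i v = b := (Prod.ext_iff.mp heq).2
        have hu : u = psi r i a := phi_inj (hsubv l hl u (mem_of_arc huv).1)
          (psi_mem i a) (by rw [h1, phi_psi])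
        have hv : v = psi r i b := phi_inj (hsubv l hl v (mem_of_arc huv).2)
          (psi_mem i b) (by rw [h2, phi_psi])
        rw [← hu, ← hv]
        exact huv
      · intro h
        exact List.mem_map.mpr ⟨(psi r i a, psi r i b), h, by
          simp [Prod.map, phi_psi]⟩
    -- exactly-one coverage for transported arcs
    have hcovOK : covOK (l₁.map (phi r i)) (l₂.map (phi r i)) (l₃.map (phi r i)) = true := by
      simp only [covOK, List.all_eq_true, Bool.or_eq_true, decide_eq_true_eq]
      intro u _ v _
      by_cases huv : u = v
      · exact Or.inl huv
      right
      have hpsine : psi r i u ≠ psi r i v := fun h => huv (psi_inj h)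
      have hpA : (psi r i u, psi r i v) ∈ A :=
        hmemA.mpr ⟨psi_mem i u, psi_mem i v, hpsine⟩
      obtain ⟨l, ⟨hlCi, hlarc⟩, huniq⟩ := hcov _ hpA
      have hl_cases : l = l₁ ∨ l = l₂ ∨ l = l₃ := by
        have := hlCi
        rw [hCieq] at this
        simpa using this
      have key : ∀ (la lb : List (ChainK4V r)), la ∈ Ci → lb ∈ Ci →
          l = la → lb ≠ la →
          (u, v) ∈ cycleArcs (la.map (phi r i)) ∧
          (u, v) ∉ cycleArcs (lb.map (phi r i)) := by
        intro la lb hla hlb heq hba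
        have hlarc' : (psi r i u, psi r i v) ∈ cycleArcs la := heq ▸ hlarc
        refine ⟨(harc_iff _ hla u v).mpr hlarc', ?_⟩
        intro hmem
        exact hba ((huniq lb ⟨hlb, (harc_iff _ hlb u v).mp hmem⟩).trans heq)
      have hcase1 : ∀ lz, l = lz → lz = l₁ ∨ lz = l₂ ∨ lz = l₃ → True := fun _ _ _ => trivial
      rcases hl_cases with hleq | hleq | hleq
      · exact Or.inl ⟨(key l₁ l₂ hmem1 hmem2 hleq (Ne.symm h12)).1,
          (key l₁ l₂ hmem1 hmem2 hleq (Ne.symm h12)).2,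
          (key l₁ l₃ hmem1 hmem3 hleq (Ne.symm h13)).2⟩
      · exact Or.inr (Or.inl ⟨(key l₂ l₁ hmem2 hmem1 hleq h12).2,
          (key l₂ l₁ hmem2 hmem1 hleq h12).1,
          (key l₂ l₃ hmem2 hmem3 hleq (Ne.symm h23)).2⟩)
      · exact Or.inr (Or.inr ⟨(key l₃ l₁ hmem3 hmem1 hleq h13).2,
          (key l₃ l₂ hmem3 hmem2 hleq h23).2,
          (key l₃ l₁ hmem3 hmem1 hleq h13).1⟩)
    have := noTriple _ (hmquad _ hmem1) _ (hmquad _ hmem2) _ (hmquad _ hmem3)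
    exact absurd (hcovOK.symm.trans this) (by decide)
  · exact hcard4

/-- A third vertex of a block, different from two given vertices. -/
lemma third_vertex (i : Fin r) (u v : ChainK4V r) :
    ∃ w, w ≠ u ∧ w ≠ v ∧ inBlockK4 r i w := by
  have h : ∃ w ∈ bverts r i, w ≠ u ∧ w ≠ v := by
    by_contra h
    push_neg at h
    have hsub : bverts r i ⊆ [u, v] := by
      intro w hw
      rcases Decidable.em (w = u) with rfl | hwu
      · simp
      · have := h w hw hwu
        simp [this]
    have := (List.subperm_of_subset (bverts_nodup i) hsub).length_le
    simp [bverts] at this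
  obtain ⟨w, hw, hwu, hwv⟩ := h
  exact ⟨w, hwu, hwv, mem_bverts.mp hw⟩


end ChainK4Aux

/-- For every `r ≥ 1` there is a bridgeless graph of order `n = 3r + 1`, namely the
chain of `r` copies of `K₄` glued along a path, each of whose OCDCs consists of
exactly `4r = (n - 1) + r` directed cycles. -/
theorem exists_graph_every_OCDC_large (r : ℕ) (hr : 1 ≤ r) :
    (∀ e ∈ (chainOfK4 r).edgeSet, ¬ (chainOfK4 r).IsBridge e) ∧
    Nat.card (Fin (r + 1) ⊕ Fin r × Fin 2) = 3 * r + 1 ∧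
    ∀ C : Finset (List (Fin (r + 1) ⊕ Fin r × Fin 2)),
      IsOCDC (chainOfK4 r) C → C.card = 4 * r := by
  refine ⟨?_, ?_, ?_⟩
  · -- bridgeless
    intro e he
    induction e with
    | h u v =>
      rw [SimpleGraph.mem_edgeSet] at he
      rw [SimpleGraph.isBridge_iff_adj_and_forall_cycle_notMem he]
      intro hcyc
      obtain ⟨hne, i, hu, hv⟩ := he
      obtain ⟨w, hwu, hwv, hw⟩ := third_vertex i u v
      have h_uv : (chainOfK4 r).Adj u v := ⟨hne, i, hu, hv⟩
      have h_vw : (chainOfK4 r).Adj v w := ⟨Ne.symm hwv, i, hv, hw⟩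
      have h_wu : (chainOfK4 r).Adj w u := ⟨hwu, i, hw, hu⟩
      have hp : ((SimpleGraph.Walk.cons h_uv (SimpleGraph.Walk.cons h_vw
          (SimpleGraph.Walk.cons h_wu SimpleGraph.Walk.nil))) : (chainOfK4 r).Walk u u).IsCycle := by
        simp [SimpleGraph.Walk.isCycle_def, SimpleGraph.Walk.isTrail_def,
          SimpleGraph.Walk.edges, Sym2.eq, Sym2.rel_iff', Prod.ext_iff]
        tauto
      have := hcyc _ hp
      simp [SimpleGraph.Walk.edges] at this
  · -- cardinality
    simp only [Nat.card_eq_fintype_card, Fintype.card_sum, Fintype.card_prod,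
      Fintype.card_fin]
    omega
  · -- every OCDC has 4r cycles
    intro C hC
    classical
    set F : List (ChainK4V r) → Fin r := fun l =>
      @dite _ (∃ i : Fin r, ∀ v ∈ l, inBlockK4 r i v) (Classical.propDecidable _)
        (fun h => h.choose) (fun _ => ⟨0, hr⟩) with hFdef
    have hF : ∀ l ∈ C, ∀ v ∈ l, inBlockK4 r (F l) v := by
      intro l hl
      have hex : ∃ i : Fin r, ∀ v ∈ l, inBlockK4 r i v := cycle_confined (hC.1 l hl)
      rw [hFdef]
      simp only [dif_pos hex]
      exact hex.choose_spec
    have h1 := Finset.card_eq_sum_card_fiberwise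
      (f := F) (s := C) (t := Finset.univ) (fun x _ => Finset.mem_univ _)
    rw [h1, Finset.sum_congr rfl (fun i _ => block_count hC F hF i),
      Finset.sum_const, Finset.card_univ, Fintype.card_fin, smul_eq_mul, mul_comm]
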